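/- Let W be a set of bounded nonnegative measurable weight functions on ℝ^d, G a set of nonnegative continuous functions on ℝ^d, and P a set of probability densities on ℝ^d with ∫ w(y) p(y) dy > 0 for all w ∈ W, p ∈ P. For w ∈ W set G_w := {g ∈ G : 0 < ∫ w(z) g(z) dz < ∞} and, for g ∈ G_w, g_w := w·g / ∫ w(z) g(z) dz; assume g_w ∈ P for all w ∈ W and g ∈ G_w. Let S : P × ℝ^d → ℝ ∪ {∞} be a proper scoring rule with respect to P. Define S̃(g, y, w) := w(y) S(g_w, y) if g ∈ G_w and S̃(g, y, w) := ∞ otherwise. Then: (i) S̃ is localizing: if g, h ∈ G agree on {w > 0}, then S̃(g, ·, w) = S̃(h, ·, w) almost everywhere; (ii) S̃ is locally proper with respect to (G, P): for every w ∈ W, p ∈ P, every g ∈ G with g = p on {w > 0}, and every h ∈ G, one has ∫ S̃(g, y, w) p(y) dy ≤ ∫ S̃(h, y, w) p(y) dy; (iii) if S is strictly proper with respect to P, then S̃ is proportionally locally proper: for every w ∈ W, p ∈ P, every g ∈ G with g ∝ p on {w > 0}, and every h ∈ G, ∫ S̃(g, y, w) p(y) dy ≤ ∫ S̃(h, y,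 w) p(y) dy, with equality if and only if h ∝ p on {w > 0}. -/

import Mathlib

open MeasureTheory Filter Topology
open scoped EReal Classical

noncomputable section

/-- `ℝ^d` as a pi type; `volume` is `d`-dimensional Lebesgue measure. -/
abbrev Vec (d : ℕ) := Fin d → ℝ

/-- `G_w = {g ∈ G : 0 < ∫ w g < ∞}`. -/
def Gset {d : ℕ} (G : Set (Vec d → ℝ)) (w : Vec d → ℝ) : Set (Vec d → ℝ) :=
  {g ∈ G | Integrable (fun y => w y * g y) ∧ 0 < ∫ y : Vec d, w y * g y}

/-- The normalized density `g_w = w g / ∫ w g`. -/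
noncomputable def nrm {d : ℕ} (w g : Vec d → ℝ) : Vec d → ℝ :=
  fun y => w y * g y / ∫ y' : Vec d, w y' * g y'

/-- The pointwise weighted score `S̃(g, y, w)`, equal to `w(y) S(g_w, y)` if `g ∈ G_w`
and `∞` otherwise. -/
noncomputable def wScore {d : ℕ} (S : (Vec d → ℝ) → Vec d → ℝ) (G : Set (Vec d → ℝ))
    (g : Vec d → ℝ) (y : Vec d) (w : Vec d → ℝ) : EReal :=
  if g ∈ Gset G w then ((w y * S (nrm w g) y : ℝ) : EReal) else ⊤

/-- The expected weighted score `S̃(g, p, w) = ∫ S̃(g, y, w) p(y) dy`. -/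
noncomputable def wExpScore {d : ℕ} (S : (Vec d → ℝ) → Vec d → ℝ) (G : Set (Vec d → ℝ))
    (g p w : Vec d → ℝ) : EReal :=
  if g ∈ Gset G w then ((∫ y : Vec d, w y * S (nrm w g) y * p y : ℝ) : EReal) else ⊤

/-- localization of a proper scoring rule: `S̃` is localizing, locally
proper, and (if `S` is strictly proper) proportionally locally proper. -/
theorem statement12 {d : ℕ}
    (W G P : Set (Vec d → ℝ))
    (hW : ∀ w ∈ W, Measurable w ∧ (∀ y, 0 ≤ w y) ∧ ∃ C : ℝ, ∀ y, w y ≤ C)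
    (hG : ∀ g ∈ G, Continuous g ∧ ∀ y, 0 ≤ g y)
    (hP : ∀ p ∈ P, Measurable p ∧ (∀ y, 0 ≤ p y) ∧ (∫ y : Vec d, p y) = 1)
    (hWP : ∀ w ∈ W, ∀ p ∈ P, 0 < ∫ y : Vec d, w y * p y)
    (hGwP : ∀ w ∈ W, ∀ g ∈ Gset G w, nrm w g ∈ P)
    (S : (Vec d → ℝ) → Vec d → ℝ)
    (hSint : ∀ q ∈ P, ∀ p ∈ P, Integrable (fun y => S q y * p y))
    (hproper : ∀ p ∈ P, ∀ q ∈ P,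
      (∫ y : Vec d, S p y * p y) ≤ ∫ y : Vec d, S q y * p y) :
    -- (i) S̃ is localizing
    (∀ w ∈ W, ∀ g ∈ G, ∀ h ∈ G, Set.EqOn g h {y | 0 < w y} →
      ∀ᵐ y : Vec d, wScore S G g y w = wScore S G h y w) ∧
    -- (ii) S̃ is locally proper with respect to (G, P)
    (∀ w ∈ W, ∀ p ∈ P, ∀ g ∈ G, Set.EqOn g p {y | 0 < w y} →
      ∀ h ∈ G, wExpScore S G g p w ≤ wExpScore S G h p w) ∧
    -- (iii) if S is strictly proper, then S̃ is proportionally locally proper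
    ((∀ p ∈ P, ∀ q ∈ P,
        (∫ y : Vec d, S q y * p y) = (∫ y : Vec d, S p y * p y) → q = p) →
      ∀ w ∈ W, ∀ p ∈ P, ∀ g ∈ G,
        (∃ c : ℝ, 0 < c ∧ Set.EqOn g (fun y => c * p y) {y | 0 < w y}) →
        ∀ h ∈ G,
          wExpScore S G g p w ≤ wExpScore S G h p w ∧
          (wExpScore S G g p w = wExpScore S G h p w ↔
            ∃ c : ℝ, 0 < c ∧ Set.EqOn h (fun y => c * p y) {y | 0 < w y})) := by
  -- every density in `P` is integrable (its integral is `1 ≠ 0`)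
  have hPint : ∀ p ∈ P, Integrable p := by
    intro p hp
    by_contra hni
    have h1 := (hP p hp).2.2
    rw [integral_undef hni] at h1
    norm_num at h1
  -- `w * p` is integrable for `w ∈ W`, `p ∈ P`
  have hwmul : ∀ w ∈ W, ∀ p ∈ P, Integrable (fun y => w y * p y) := by
    intro w hw p hp
    obtain ⟨hwm, hw0, C, hC⟩ := hW w hw
    refine (hPint p hp).bdd_mul (c := C) hwm.aestronglyMeasurable (Filter.Eventually.of_forall fun y => ?_)
    rw [Real.norm_eq_abs, abs_of_nonneg (hw0 y)]
    exact hC y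
  -- pointwise product equality from `EqOn` on `{w > 0}`
  have hprod : ∀ w : Vec d → ℝ, (∀ y, 0 ≤ w y) → ∀ g h : Vec d → ℝ,
      Set.EqOn g h {y | 0 < w y} → ∀ y, w y * g y = w y * h y := by
    intro w hw0 g h hgh y
    rcases (hw0 y).eq_or_lt with h0 | h0
    · rw [← h0, zero_mul, zero_mul]
    · rw [hgh h0]
  -- key lemma A: if `f = c₀ • p` on `{w > 0}` then `f ∈ Gset G w` and
  -- `nrm w f` is the normalization of `w p`.
  have keyA : ∀ w ∈ W, ∀ p ∈ P, ∀ f ∈ G, ∀ c₀ : ℝ, 0 < c₀ →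
      Set.EqOn f (fun y => c₀ * p y) {y | 0 < w y} →
      f ∈ Gset G w ∧ nrm w f = fun y => w y * p y / ∫ y' : Vec d, w y' * p y' := by
    intro w hw p hp f hf c₀ hc₀ hfp
    have hw0 := (hW w hw).2.1
    have heq : (fun y => w y * f y) = (fun y => c₀ * (w y * p y)) := by
      funext y
      rcases (hw0 y).eq_or_lt with h0 | h0
      · rw [← h0]; ring
      · rw [hfp h0]; ring
    have hc : 0 < ∫ y : Vec d, w y * p y := hWP w hw p hp
    have hint : Integrable (fun y => w y * f y) := by
      rw [heq]; exact (hwmul w hw p hp).const_mul c₀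
    have hIval : (∫ y : Vec d, w y * f y) = c₀ * ∫ y : Vec d, w y * p y := by
      rw [heq, integral_const_mul]
    have hIpos : 0 < ∫ y : Vec d, w y * f y := by
      rw [hIval]; positivity
    refine ⟨⟨hf, hint, hIpos⟩, ?_⟩
    funext y
    show w y * f y / (∫ y' : Vec d, w y' * f y') = _
    rw [hIval, congrFun heq y]
    exact mul_div_mul_left _ _ hc₀.ne'
  -- key lemma B: expected weighted score of `h ∈ Gset G w` in terms of `q`
  have keyB : ∀ w ∈ W, ∀ p ∈ P, ∀ q : Vec d → ℝ,
      q = (fun y => w y * p y / ∫ y' : Vec d, w y' * p y') →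
      ∀ h ∈ Gset G w, wExpScore S G h p w =
        (((∫ y : Vec d, w y * p y) * ∫ y : Vec d, S (nrm w h) y * q y : ℝ) : EReal) := by
    intro w hw p hp q hq h hm
    have hc : 0 < ∫ y : Vec d, w y * p y := hWP w hw p hp
    unfold wExpScore
    rw [if_pos hm]
    congr 1
    rw [← integral_const_mul]
    congr 1
    funext y
    rw [hq]
    field_simp
  -- key lemma C: if `nrm w h` is the normalization of `w p` then `h ∝ p` on `{w > 0}`
  have keyC : ∀ w ∈ W, ∀ p ∈ P, ∀ h ∈ Gset G w,
      nrm w h = (fun y => w y * p y / ∫ y' : Vec d, w y' * p y') →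
      ∃ c' : ℝ, 0 < c' ∧ Set.EqOn h (fun y => c' * p y) {y | 0 < w y} := by
    intro w hw p hp h hm hnrm
    have hc : 0 < ∫ y : Vec d, w y * p y := hWP w hw p hp
    have hI : 0 < ∫ y : Vec d, w y * h y := hm.2.2
    refine ⟨(∫ y : Vec d, w y * h y) / ∫ y : Vec d, w y * p y, by positivity, ?_⟩
    intro y hy
    have h1 : w y * h y / (∫ y' : Vec d, w y' * h y') =
        w y * p y / ∫ y' : Vec d, w y' * p y' := congrFun hnrm y
    rw [mul_div_assoc, mul_div_assoc] at h1
    have h2 := mul_left_cancel₀ (ne_of_gt hy) h1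
    rw [div_eq_div_iff hI.ne' hc.ne'] at h2
    show h y = _ * p y
    rw [div_mul_eq_mul_div, eq_div_iff hc.ne']
    linear_combination h2
  refine ⟨?_, ?_, ?_⟩
  -- (i)
  · intro w hw g hg h hh hgh
    have hw0 := (hW w hw).2.1
    have heq : (fun y => w y * g y) = fun y => w y * h y := funext (hprod w hw0 g h hgh)
    have hIeq : (∫ y : Vec d, w y * g y) = ∫ y : Vec d, w y * h y := by rw [heq]
    have hmem : g ∈ Gset G w ↔ h ∈ Gset G w := by
      unfold Gset
      simp only [Set.mem_setOf_eq, heq, hg, hh, true_and]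
    have hnrm : nrm w g = nrm w h := by
      funext y
      show w y * g y / (∫ y' : Vec d, w y' * g y') = w y * h y / _
      rw [hprod w hw0 g h hgh y, hIeq]
    refine Filter.Eventually.of_forall fun y => ?_
    unfold wScore
    rw [hnrm]
    rcases Classical.em (h ∈ Gset G w) with hm | hm
    · rw [if_pos (hmem.mpr hm), if_pos hm]
    · rw [if_neg (fun hcon => hm (hmem.mp hcon)), if_neg hm]
  -- (ii)
  · intro w hw p hp g hg hgp h hh
    obtain ⟨hgG, hnrmg⟩ := keyA w hw p hp g hg 1 one_pos
      (fun y hy => by rw [hgp hy]; ring)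
    have hc : 0 < ∫ y : Vec d, w y * p y := hWP w hw p hp
    by_cases hm : h ∈ Gset G w
    · rw [keyB w hw p hp (nrm w g) hnrmg g hgG, keyB w hw p hp (nrm w g) hnrmg h hm]
      have hqP : nrm w g ∈ P := hGwP w hw g hgG
      have hprop := hproper (nrm w g) hqP (nrm w h) (hGwP w hw h hm)
      exact_mod_cast mul_le_mul_of_nonneg_left hprop hc.le
    · unfold wExpScore
      rw [if_neg hm]
      exact le_top
  -- (iii)
  · intro hstrict w hw p hp g hg ⟨c₀, hc₀, hgp⟩ h hh
    obtain ⟨hgG, hnrmg⟩ := keyA w hw p hp g hg c₀ hc₀ hgp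
    have hc : 0 < ∫ y : Vec d, w y * p y := hWP w hw p hp
    have hqP : nrm w g ∈ P := hGwP w hw g hgG
    by_cases hm : h ∈ Gset G w
    · have hBg := keyB w hw p hp (nrm w g) hnrmg g hgG
      have hBh := keyB w hw p hp (nrm w g) hnrmg h hm
      have hhP : nrm w h ∈ P := hGwP w hw h hm
      constructor
      · rw [hBg, hBh]
        exact_mod_cast mul_le_mul_of_nonneg_left (hproper (nrm w g) hqP (nrm w h) hhP) hc.le
      · rw [hBg, hBh]
        constructor
        · intro heq
          have h1 : (∫ y : Vec d, S (nrm w h) y * nrm w g y) =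
              ∫ y : Vec d, S (nrm w g) y * nrm w g y := by
            have h2 : ((∫ y : Vec d, w y * p y) * ∫ y : Vec d, S (nrm w g) y * nrm w g y) =
                (∫ y : Vec d, w y * p y) * ∫ y : Vec d, S (nrm w h) y * nrm w g y := by
              exact_mod_cast heq
            exact (mul_left_cancel₀ hc.ne' h2).symm
          have h3 := hstrict (nrm w g) hqP (nrm w h) hhP h1
          exact keyC w hw p hp h hm (h3.trans hnrmg)
        · rintro ⟨c', hc', hhp⟩
          obtain ⟨-, hnrmh⟩ := keyA w hw p hp h hh c' hc' hhp
          rw [hnrmh.trans hnrmg.symm]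
    · constructor
      · unfold wExpScore
        rw [if_neg hm]
        exact le_top
      · constructor
        · intro heq
          exfalso
          rw [keyB w hw p hp (nrm w g) hnrmg g hgG] at heq
          unfold wExpScore at heq
          rw [if_neg hm] at heq
          exact EReal.coe_ne_top _ heq
        · rintro ⟨c', hc', hhp⟩
          exact absurd (keyA w hw p hp h hh c' hc' hhp).1 hm
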